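/- Let T be a pruned tree on a non-empty countable set A and let X be the set of infinite branches of T with its cylinder-set topology. A function f : X → ℝ is of Baire class 1 (i.e., a pointwise limit of a sequence of continuous functions X → ℝ) if and only if both f and −f are limsup functions. -/

import Mathlib

open Filter Topology

/-- The initial segment `(x₀, …, x_{n-1})` of an infinite sequence `x`. -/
def initSeg {β : Type*} (x : ℕ → β) (n : ℕ) : List β :=
  List.ofFn fun i : Fin n => x i

/-- `T` is a pruned tree on `A`: it contains the empty sequence, is closed under
prefixes, and every element has a proper extension in `T`. -/
def IsPrunedTree {A : Type*} (T : Set (List A)) : Prop :=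
  [] ∈ T ∧ (∀ s ∈ T, ∀ t : List A, t <+: s → t ∈ T) ∧ ∀ s ∈ T, ∃ a : A, s ++ [a] ∈ T

/-- The space `X` of infinite branches of the tree `T`, topologized as a subspace of
the product `ℕ → A` (with `A` discrete); this is exactly the cylinder-set topology. -/
abbrev Branches {A : Type*} (T : Set (List A)) : Type _ :=
  {x : ℕ → A // ∀ n : ℕ, initSeg x n ∈ T}

/-- The cylinder set `O(s)` of all branches with initial segment `s`. -/
def cyl {A : Type*} (T : Set (List A)) (s : List A) : Set (Branches T) :=
  {x | initSeg x.val s.length = s}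

/-- `f : X → ℝ` is a limsup function: there is `u` defined on finite sequences with
`f x = limsup_{t → ∞} u (x₀, …, x_t)` for every branch `x` (the limsup being computed
in the extended reals and required to equal the real number `f x`). -/
def IsLimsupFunction {A : Type*} {T : Set (List A)} (f : Branches T → ℝ) : Prop :=
  ∃ u : List A → ℝ, ∀ x : Branches T,
    (f x : EReal) = Filter.limsup (fun t : ℕ => (u (initSeg x.val (t + 1)) : EReal)) Filter.atTop

/-- `f` is of Baire class 1: a pointwise limit of continuous functions. -/
def BaireClassOne {X : Type*} [TopologicalSpace X] (f : X → ℝ) : Prop :=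
  ∃ g : ℕ → X → ℝ, (∀ n, Continuous (g n)) ∧
    ∀ x, Filter.Tendsto (fun n => g n x) Filter.atTop (nhds (f x))

/-- A Cantor set: a subset homeomorphic to the Cantor space `2^ℕ`. -/
def IsCantorSet {X : Type*} [TopologicalSpace X] (C : Set X) : Prop :=
  Nonempty (C ≃ₜ (ℕ → Bool))

/-- A Bernstein set: neither it nor its complement contains a nonempty perfect set. -/
def IsBernsteinSet {X : Type*} [TopologicalSpace X] (B : Set X) : Prop :=
  ∀ P : Set X, Perfect P → P.Nonempty → ¬ P ⊆ B ∧ ¬ P ⊆ Bᶜ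

/-- A co-analytic set: the complement of an analytic set. -/
def IsCoanalytic {X : Type*} [TopologicalSpace X] (s : Set X) : Prop :=
  MeasureTheory.AnalyticSet sᶜ

/-- The sequence of moves produced by Player I's strategy `σ` against the sequence `v`
of moves of Player II: Player I's `n`-th move depends on `(v₀, …, v_{n-1})`. -/
def playI {A M : Type*} (σ : List M → A) (v : ℕ → M) : ℕ → A :=
  fun n => σ (initSeg v n)

/-- Player II has a winning strategy in the game `Γ(f)`: a strategy for Player II assigns
to each position `(x₀, …, x_t)` of moves of Player I a real number `v_t` (Player II's own
previous moves being determined), and it is winning if for every run, i.e. every branch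
`x` that Player I may produce, `f x = limsup_{t → ∞} v_t`. -/
def PlayerIIWinsGamma {A : Type*} {T : Set (List A)} (f : Branches T → ℝ) : Prop :=
  ∃ τ : List A → ℝ, ∀ x : Branches T,
    (f x : EReal) = Filter.limsup (fun t : ℕ => (τ (initSeg x.val (t + 1)) : EReal)) Filter.atTop

/-- Player I has a winning strategy in the game `Γ_R(f)` where Player II's moves are
restricted to `R`: a strategy for Player I assigns to each position `(v₀, …, v_{n-1})` of
moves of Player II a point of `A`, and it is winning if against every sequence of moves
of Player II in `R` the moves of Player I are legal (all initial segments lie in `T`) and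
the resulting branch `x` satisfies `f x ≠ limsup_{t → ∞} v_t`. -/
def PlayerIWinsGammaR {A : Type*} {T : Set (List A)} (R : Set ℝ) (f : Branches T → ℝ) :
    Prop :=
  ∃ σ : List ℝ → A, ∀ v : ℕ → ℝ, (∀ t, v t ∈ R) →
    ∃ h : ∀ n : ℕ, initSeg (playI σ v) n ∈ T,
      (f ⟨playI σ v, h⟩ : EReal) ≠ Filter.limsup (fun t : ℕ => (v t : EReal)) Filter.atTop

/-- Player I has a winning strategy in the game `Γ(f)`. -/
def PlayerIWinsGamma {A : Type*} {T : Set (List A)} (f : Branches T → ℝ) : Prop :=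
  ∃ σ : List ℝ → A, ∀ v : ℕ → ℝ,
    ∃ h : ∀ n : ℕ, initSeg (playI σ v) n ∈ T,
      (f ⟨playI σ v, h⟩ : EReal) ≠ Filter.limsup (fun t : ℕ => (v t : EReal)) Filter.atTop

/-- Player II has a winning strategy in the game `Γ'(f)`, in which Player II's moves are
pairs `(v_t, w_t)` of reals and Player II wins a run iff
`f x = limsup_{t → ∞} v_t = liminf_{t → ∞} w_t`. -/
def PlayerIIWinsGamma' {A : Type*} {T : Set (List A)} (f : Branches T → ℝ) : Prop :=
  ∃ τ : List A → ℝ × ℝ, ∀ x : Branches T,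
    (f x : EReal) =
      Filter.limsup (fun t : ℕ => ((τ (initSeg x.val (t + 1))).1 : EReal)) Filter.atTop ∧
    (f x : EReal) =
      Filter.liminf (fun t : ℕ => ((τ (initSeg x.val (t + 1))).2 : EReal)) Filter.atTop

/-- Player I has a winning strategy in the game `Γ'(f)`. -/
def PlayerIWinsGamma' {A : Type*} {T : Set (List A)} (f : Branches T → ℝ) : Prop :=
  ∃ σ : List (ℝ × ℝ) → A, ∀ v : ℕ → ℝ × ℝ,
    ∃ h : ∀ n : ℕ, initSeg (playI σ v) n ∈ T,
      ¬ ((f ⟨playI σ v, h⟩ : EReal) =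
            Filter.limsup (fun t : ℕ => ((v t).1 : EReal)) Filter.atTop ∧
         (f ⟨playI σ v, h⟩ : EReal) =
            Filter.liminf (fun t : ℕ => ((v t).2 : EReal)) Filter.atTop)

namespace BLF

variable {A : Type*} [TopologicalSpace A] [DiscreteTopology A] {T : Set (List A)}

theorem initSeg_length {β : Type*} (x : ℕ → β) (n : ℕ) : (initSeg x n).length = n := by
  simp [initSeg]

theorem initSeg_eq_iff {β : Type*} {x y : ℕ → β} {n : ℕ} :
    initSeg x n = initSeg y n ↔ ∀ i, i < n → x i = y i := by
  rw [initSeg, initSeg, List.ofFn_inj, funext_iff]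
  exact ⟨fun h i hi => h ⟨i, hi⟩, fun h i => h i i.2⟩

theorem initSeg_eq_of_le {β : Type*} {x y : ℕ → β} {n m : ℕ} (hmn : m ≤ n)
    (h : initSeg x n = initSeg y n) : initSeg x m = initSeg y m := by
  rw [initSeg_eq_iff] at h ⊢
  exact fun i hi => h i (lt_of_lt_of_le hi hmn)

theorem cyl_mem_nhds (x : Branches T) (N : ℕ) :
    {y : Branches T | initSeg y.val N = initSeg x.val N} ∈ 𝓝 x := by
  have heq : {y : Branches T | initSeg y.val N = initSeg x.val N} =
      ⋂ i ∈ Finset.range N, {y : Branches T | y.val i = x.val i} := by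
    ext y
    simp only [Set.mem_setOf_eq, Set.mem_iInter, Finset.mem_range, initSeg_eq_iff]
  rw [heq]
  refine IsOpen.mem_nhds (isOpen_biInter_finset fun i _ => ?_) (by simp)
  have hc : Continuous (fun y : Branches T => y.val i) :=
    (continuous_apply i).comp continuous_subtype_val
  exact (isOpen_discrete ({x.val i} : Set A)).preimage hc

theorem exists_depth (x : Branches T) {U : Set (Branches T)} (hU : U ∈ 𝓝 x) :
    ∃ N, ∀ y : Branches T, initSeg y.val N = initSeg x.val N → y ∈ U := by
  by_contra h
  push_neg at h
  choose y hy1 hy2 using h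
  have hten : Tendsto y atTop (𝓝 x) := by
    rw [tendsto_subtype_rng, tendsto_pi_nhds]
    intro i
    refine tendsto_nhds_of_eventually_eq ?_
    filter_upwards [eventually_ge_atTop (i + 1)] with n hn
    exact initSeg_eq_iff.1 (hy1 n) i (lt_of_lt_of_le (Nat.lt_succ_self i) hn)
  obtain ⟨n, hn⟩ := Filter.mem_atTop_sets.1 (Filter.mem_map.1 (hten hU))
  exact hy2 n (hn n le_rfl)

theorem limsup_coe_of_tendsto {v : ℕ → ℝ} {c : ℝ} (h : Tendsto v atTop (𝓝 c)) :
    Filter.limsup (fun t => (v t : EReal)) atTop = (c : EReal) :=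
  (EReal.tendsto_coe.2 h).limsup_eq

theorem eventually_lt_of_coe_limsup {v : ℕ → ℝ} {c : ℝ}
    (h : (c : EReal) = Filter.limsup (fun t => (v t : EReal)) atTop) {δ : ℝ} (hδ : 0 < δ) :
    ∀ᶠ t in atTop, v t < c + δ := by
  have h1 : Filter.limsup (fun t => (v t : EReal)) atTop < ((c + δ : ℝ) : EReal) := by
    rw [← h]
    exact_mod_cast lt_add_of_pos_right c hδ
  filter_upwards [Filter.eventually_lt_of_limsup_lt h1] with t ht
  exact_mod_cast ht

theorem frequently_gt_of_coe_limsup {v : ℕ → ℝ} {c : ℝ}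
    (h : (c : EReal) = Filter.limsup (fun t => (v t : EReal)) atTop) {δ : ℝ} (hδ : 0 < δ) :
    ∃ᶠ t in atTop, c - δ < v t := by
  have h1 : ((c - δ : ℝ) : EReal) < Filter.limsup (fun t => (v t : EReal)) atTop := by
    rw [← h]
    exact_mod_cast sub_lt_self c hδ
  have := Filter.frequently_lt_of_lt_limsup (by isBoundedDefault) h1
  exact this.mono fun t ht => by exact_mod_cast ht

end BLF

namespace BLF

variable {A : Type*} {T : Set (List A)}

noncomputable def stepT (hT : IsPrunedTree T) (p : {s : List A // s ∈ T}) :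
    {s : List A // s ∈ T} :=
  ⟨p.1 ++ [Classical.choose (hT.2.2 p.1 p.2)], Classical.choose_spec (hT.2.2 p.1 p.2)⟩

noncomputable def chainT (hT : IsPrunedTree T) (p : {s : List A // s ∈ T}) (n : ℕ) :
    {s : List A // s ∈ T} :=
  (stepT hT)^[n] p

theorem chainT_succ (hT : IsPrunedTree T) (p : {s : List A // s ∈ T}) (n : ℕ) :
    chainT hT p (n + 1) = stepT hT (chainT hT p n) :=
  Function.iterate_succ_apply' _ _ _

theorem chainT_length (hT : IsPrunedTree T) (p : {s : List A // s ∈ T}) (n : ℕ) :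
    ((chainT hT p n).1).length = p.1.length + n := by
  induction n with
  | zero => rfl
  | succ n ih =>
    rw [chainT_succ]
    simp only [stepT, List.length_append, List.length_cons, List.length_nil, ih]
    omega

theorem chainT_prefix (hT : IsPrunedTree T) (p : {s : List A // s ∈ T}) {m n : ℕ}
    (h : m ≤ n) : (chainT hT p m).1 <+: (chainT hT p n).1 := by
  induction n with
  | zero => cases Nat.le_zero.1 h; exact List.prefix_refl _
  | succ n ih =>
    rcases Nat.lt_or_ge m (n+1) with h' | h'
    · refine (ih (Nat.lt_succ_iff.1 h')).trans ?_
      rw [chainT_succ]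
      exact ⟨_, rfl⟩
    · have : m = n + 1 := le_antisymm h h'
      subst this
      exact List.prefix_refl _

noncomputable def extB [Nonempty A] (hT : IsPrunedTree T) (p : {s : List A // s ∈ T}) :
    ℕ → A :=
  fun i => ((chainT hT p (i + 1)).1).getD i (Classical.arbitrary A)

theorem initSeg_extB [Nonempty A] (hT : IsPrunedTree T) (p : {s : List A // s ∈ T})
    (n m : ℕ) (h : n ≤ p.1.length + m) :
    initSeg (extB hT p) n = ((chainT hT p m).1).take n := by
  have hlen : n ≤ ((chainT hT p m).1).length := by rw [chainT_length]; exact h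
  apply List.ext_getElem
  · rw [initSeg_length, List.length_take]
    omega
  · intro i h1 h2
    rw [initSeg_length] at h1
    have hi1 : i < ((chainT hT p (i + 1)).1).length := by
      rw [chainT_length]; omega
    have him : i < ((chainT hT p m).1).length := by omega
    have hget : ((chainT hT p (i + 1)).1).getD i (Classical.arbitrary A)
        = ((chainT hT p m).1)[i] := by
      rcases Nat.le_total (i + 1) m with hc | hc
      · rw [List.getD_eq_getElem _ _ hi1]
        exact (chainT_prefix hT p hc).getElem hi1
      · rw [List.getD_eq_getElem _ _ hi1]
        exact ((chainT_prefix hT p hc).getElem him).symm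
    rw [List.getElem_take]
    show (List.ofFn fun j : Fin n => extB hT p j)[i] = _
    exact (List.getElem_ofFn ..).trans hget

theorem extB_mem [Nonempty A] (hT : IsPrunedTree T) (p : {s : List A // s ∈ T}) (n : ℕ) :
    initSeg (extB hT p) n ∈ T := by
  rw [initSeg_extB hT p n n (by omega)]
  exact hT.2.1 _ (chainT hT p n).2 _ (List.take_prefix _ _)

noncomputable def extBranch [Nonempty A] (hT : IsPrunedTree T) (p : {s : List A // s ∈ T}) :
    Branches T :=
  ⟨extB hT p, extB_mem hT p⟩

theorem initSeg_extBranch [Nonempty A] (hT : IsPrunedTree T) (p : {s : List A // s ∈ T}) :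
    initSeg (extBranch hT p).val p.1.length = p.1 := by
  show initSeg (extB hT p) p.1.length = p.1
  rw [initSeg_extB hT p _ 0 (by omega)]
  show (p.1).take p.1.length = p.1
  exact List.take_length -- check name

end BLF

namespace BLF

variable {A : Type*} {T : Set (List A)}

/-- Oscillation condition: all `g k`, `k ≤ n`, vary by at most `(1/2)^n` on the
cylinder of `s`. -/
def Pn (g : ℕ → Branches T → ℝ) (s : List A) (n : ℕ) : Prop :=
  ∀ k ≤ n, ∀ y z : Branches T,
    initSeg y.val s.length = s → initSeg z.val s.length = s →
      |g k y - g k z| ≤ (1/2 : ℝ) ^ n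

open Classical in
noncomputable def nsel (g : ℕ → Branches T → ℝ) (s : List A) : ℕ :=
  Nat.findGreatest (Pn g s) s.length

open Classical in
noncomputable def usel [Nonempty A] (hT : IsPrunedTree T) (g : ℕ → Branches T → ℝ)
    (s : List A) : ℝ :=
  if hs : s ∈ T then g (nsel g s) (extBranch hT ⟨s, hs⟩) else 0

variable [TopologicalSpace A] [DiscreteTopology A]

theorem forward_tendsto [Nonempty A] (hT : IsPrunedTree T) (f : Branches T → ℝ)
    (g : ℕ → Branches T → ℝ) (hgc : ∀ n, Continuous (g n))
    (hgl : ∀ x, Filter.Tendsto (fun n => g n x) Filter.atTop (nhds (f x)))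
    (x : Branches T) :
    Filter.Tendsto (fun t => usel hT g (initSeg x.val (t + 1))) Filter.atTop (nhds (f x)) := by
  classical
  rw [Metric.tendsto_atTop]
  intro ε hε
  obtain ⟨N0, hN0⟩ := Metric.tendsto_atTop.1 (hgl x) (ε/3) (by linarith)
  obtain ⟨N1, hN1⟩ : ∃ N1 : ℕ, (1/2 : ℝ) ^ N1 < ε/3 :=
    exists_pow_lt_of_lt_one (by linarith) (by norm_num)
  set N : ℕ := max (max N0 N1) 1 with hN
  have hNN0 : N0 ≤ N := le_trans (le_max_left _ _) (le_max_left _ _)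
  have hNN1 : N1 ≤ N := le_trans (le_max_right _ _) (le_max_left _ _)
  have hN1' : (1/2 : ℝ) ^ N < ε/3 :=
    lt_of_le_of_lt (pow_le_pow_of_le_one (by norm_num) (by norm_num) hNN1) hN1
  have hNpos : 1 ≤ N := le_max_right _ _
  -- continuity depths
  have hdep : ∀ k : ℕ, ∃ d : ℕ, ∀ y : Branches T,
      initSeg y.val d = initSeg x.val d → |g k y - g k x| ≤ (1/2 : ℝ) ^ N / 2 := by
    intro k
    have hball : (g k) ⁻¹' (Metric.closedBall (g k x) ((1/2 : ℝ) ^ N / 2)) ∈ 𝓝 x :=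
      (hgc k).continuousAt.preimage_mem_nhds
        (Metric.closedBall_mem_nhds _ (by positivity))
    obtain ⟨d, hd⟩ := exists_depth x hball
    refine ⟨d, fun y hy => ?_⟩
    have := hd y hy
    simpa [Metric.mem_closedBall, Real.dist_eq] using this
  choose d hd using hdep
  set D : ℕ := (Finset.range (N + 1)).sup d
  refine ⟨max D N, fun t ht => ?_⟩
  have htD : D ≤ t := le_trans (le_max_left _ _) ht
  have htN : N ≤ t := le_trans (le_max_right _ _) ht
  set s : List A := initSeg x.val (t + 1) with hs
  have hsT : s ∈ T := x.2 (t + 1)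
  have hslen : s.length = t + 1 := initSeg_length _ _
  -- Pn g s N holds
  have hPnN : Pn g s N := by
    intro k hk y z hy hz
    rw [hslen] at hy hz
    have hdk : d k ≤ t + 1 := by
      have : d k ≤ D := Finset.le_sup (Finset.mem_range.2 (Nat.lt_succ_of_le hk))
      omega
    have hy' : initSeg y.val (d k) = initSeg x.val (d k) :=
      initSeg_eq_of_le hdk (hy.trans hs)
    have hz' : initSeg z.val (d k) = initSeg x.val (d k) :=
      initSeg_eq_of_le hdk (hz.trans hs)
    have h1 := hd k y hy'
    have h2 := hd k z hz'
    have : |g k y - g k z| ≤ |g k y - g k x| + |g k x - g k z| := abs_sub_le _ _ _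
    rw [abs_sub_comm (g k x) (g k z)] at this
    linarith
  have hnselN : N ≤ nsel g s := by
    rw [nsel]
    exact Nat.le_findGreatest (by omega) hPnN
  have hPnsel : Pn g s (nsel g s) := by
    rw [nsel]
    exact Nat.findGreatest_spec (m := N) (by omega) hPnN
  have husel : usel hT g s = g (nsel g s) (extBranch hT ⟨s, hsT⟩) := by
    rw [usel]
    exact dif_pos hsT
  have hxcyl : initSeg x.val s.length = s := by rw [hslen]
  have hecyl : initSeg (extBranch hT ⟨s, hsT⟩).val s.length = s :=
    initSeg_extBranch hT ⟨s, hsT⟩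
  have h1 : |g (nsel g s) (extBranch hT ⟨s, hsT⟩) - g (nsel g s) x| ≤ (1/2 : ℝ) ^ (nsel g s) :=
    hPnsel (nsel g s) le_rfl _ _ hecyl hxcyl
  have hpow : (1/2 : ℝ) ^ (nsel g s) ≤ (1/2 : ℝ) ^ N :=
    pow_le_pow_of_le_one (by norm_num) (by norm_num) hnselN
  have h2 : |g (nsel g s) x - f x| < ε/3 := by
    have := hN0 (nsel g s) (le_trans hNN0 hnselN)
    rwa [Real.dist_eq] at this
  rw [Real.dist_eq, husel]
  have : |g (nsel g s) (extBranch hT ⟨s, hsT⟩) - f x|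
      ≤ |g (nsel g s) (extBranch hT ⟨s, hsT⟩) - g (nsel g s) x| + |g (nsel g s) x - f x| :=
    abs_sub_le _ _ _
  linarith

end BLF

namespace BLF

variable {A : Type*} {T : Set (List A)}

noncomputable def av (u : List A → ℝ) (k : ℕ) (x : Branches T) : ℝ :=
  u (initSeg x.val (k + 1))

noncomputable def Amax (u : List A → ℝ) (n j : ℕ) (x : Branches T) : ℝ :=
  (Finset.Icc n (n + j)).sup' (Finset.nonempty_Icc.2 (Nat.le_add_right n j))
    (fun k => av u k x)

noncomputable def Bmin (w : List A → ℝ) (n j : ℕ) (x : Branches T) : ℝ :=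
  (Finset.Icc n (n + j)).inf' (Finset.nonempty_Icc.2 (Nat.le_add_right n j))
    (fun k => av w k x)

def Cnd (u w : List A → ℝ) (n : ℕ) (x : Branches T) (j : ℕ) : Prop :=
  Bmin w n j x ≤ Amax u n j x + 1 / ((n : ℝ) + 1)

noncomputable instance CndDec (u w : List A → ℝ) (n : ℕ) (x : Branches T) : DecidablePred (Cnd u w n x) :=
  fun j => by unfold Cnd; infer_instance

open Classical in
noncomputable def mdef (u w : List A → ℝ) (n : ℕ) (x : Branches T) : ℕ :=
  if h : ∃ j, Cnd u w n x j then Nat.find h else 0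

noncomputable def gApp (u w : List A → ℝ) (n : ℕ) (x : Branches T) : ℝ :=
  Amax u n (mdef u w n x) x

theorem av_congr {u : List A → ℝ} {k d : ℕ} {x y : Branches T} (hk : k + 1 ≤ d)
    (h : initSeg y.val d = initSeg x.val d) : av u k y = av u k x := by
  rw [av, av, initSeg_eq_of_le hk h]

theorem Amax_congr {u : List A → ℝ} {n j d : ℕ} {x y : Branches T} (hd : n + j + 1 ≤ d)
    (h : initSeg y.val d = initSeg x.val d) : Amax u n j y = Amax u n j x := by
  rw [Amax, Amax]
  refine Finset.sup'_congr _ rfl fun k hk => ?_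
  rw [Finset.mem_Icc] at hk
  exact av_congr (by omega) h

theorem Bmin_congr {w : List A → ℝ} {n j d : ℕ} {x y : Branches T} (hd : n + j + 1 ≤ d)
    (h : initSeg y.val d = initSeg x.val d) : Bmin w n j y = Bmin w n j x := by
  rw [Bmin, Bmin]
  refine Finset.inf'_congr _ rfl fun k hk => ?_
  rw [Finset.mem_Icc] at hk
  exact av_congr (by omega) h

theorem Cnd_congr {u w : List A → ℝ} {n j d : ℕ} {x y : Branches T} (hd : n + j + 1 ≤ d)
    (h : initSeg y.val d = initSeg x.val d) : Cnd u w n y j ↔ Cnd u w n x j := by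
  rw [Cnd, Cnd, Amax_congr hd h, Bmin_congr hd h]

theorem mdef_congr {u w : List A → ℝ} {n : ℕ} {x y : Branches T}
    (hex : ∃ j, Cnd u w n x j)
    (h : initSeg y.val (n + mdef u w n x + 1) = initSeg x.val (n + mdef u w n x + 1)) :
    mdef u w n y = mdef u w n x := by
  have hmx : mdef u w n x = Nat.find hex := by unfold mdef; rw [dif_pos hex]
  have hCx : Cnd u w n x (mdef u w n x) := by rw [hmx]; exact Nat.find_spec hex
  have hCy : Cnd u w n y (mdef u w n x) := (Cnd_congr le_rfl h).2 hCx
  have hey : ∃ j, Cnd u w n y j := ⟨_, hCy⟩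
  have hmy : mdef u w n y = Nat.find hey := by unfold mdef; rw [dif_pos hey]
  apply le_antisymm
  · rw [hmy]; exact Nat.find_le hCy
  · rw [hmx]
    refine Nat.find_le ?_
    have hle : mdef u w n y ≤ mdef u w n x := by rw [hmy]; exact Nat.find_le hCy
    have hCyy : Cnd u w n y (mdef u w n y) := by rw [hmy]; exact Nat.find_spec hey
    exact (Cnd_congr (by omega) h).1 hCyy

theorem gApp_congr {u w : List A → ℝ} {n : ℕ} {x y : Branches T}
    (hex : ∃ j, Cnd u w n x j)
    (h : initSeg y.val (n + mdef u w n x + 1) = initSeg x.val (n + mdef u w n x + 1)) :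
    gApp u w n y = gApp u w n x := by
  rw [gApp, gApp, mdef_congr hex h, Amax_congr le_rfl h]

variable [TopologicalSpace A] [DiscreteTopology A]

theorem continuous_gApp {u w : List A → ℝ} (hex : ∀ (n : ℕ) (x : Branches T), ∃ j, Cnd u w n x j)
    (n : ℕ) : Continuous (gApp (T := T) u w n) := by
  rw [continuous_iff_continuousAt]
  intro x
  refine Filter.EventuallyEq.continuousAt (y := gApp u w n x) ?_
  filter_upwards [cyl_mem_nhds x (n + mdef u w n x + 1)] with y hy
  exact gApp_congr (hex n x) hy

end BLF

namespace BLF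

variable {A : Type*} {T : Set (List A)}

theorem exists_Cnd {u u' : List A → ℝ} {f : Branches T → ℝ} {x : Branches T}
    (hu : (f x : EReal) = Filter.limsup (fun t : ℕ => (u (initSeg x.val (t + 1)) : EReal))
      Filter.atTop)
    (hu' : ((-f x : ℝ) : EReal) =
      Filter.limsup (fun t : ℕ => (u' (initSeg x.val (t + 1)) : EReal)) Filter.atTop)
    (n : ℕ) : ∃ j, Cnd u (fun s => -u' s) n x j := by
  set δ : ℝ := 1 / (2 * ((n : ℝ) + 1)) with hδ
  have hδpos : 0 < δ := by positivity
  obtain ⟨k, hkn, hk⟩ := Filter.frequently_atTop.1 (frequently_gt_of_coe_limsup hu hδpos) n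
  obtain ⟨k', hk'n, hk'⟩ :=
    Filter.frequently_atTop.1 (frequently_gt_of_coe_limsup hu' hδpos) n
  refine ⟨max k k' - n, ?_⟩
  rw [Cnd]
  have hk_mem : k ∈ Finset.Icc n (n + (max k k' - n)) := by
    rw [Finset.mem_Icc]; omega
  have hk'_mem : k' ∈ Finset.Icc n (n + (max k k' - n)) := by
    rw [Finset.mem_Icc]; omega
  have h1 : f x - δ < Amax u n (max k k' - n) x := by
    refine lt_of_lt_of_le ?_ (Finset.le_sup' (fun k => av u k x) hk_mem)
    exact hk
  have h2 : Bmin (fun s => -u' s) n (max k k' - n) x < f x + δ := by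
    refine lt_of_le_of_lt (Finset.inf'_le (fun k => av (fun s => -u' s) k x) hk'_mem) ?_
    show -u' (initSeg x.val (k' + 1)) < f x + δ
    linarith
  have h2δ : 2 * δ = 1 / ((n : ℝ) + 1) := by
    rw [hδ]
    have : ((n : ℝ) + 1) ≠ 0 := by positivity
    field_simp
  linarith

theorem gApp_tendsto {u u' : List A → ℝ} {f : Branches T → ℝ} (x : Branches T)
    (hu : (f x : EReal) = Filter.limsup (fun t : ℕ => (u (initSeg x.val (t + 1)) : EReal))
      Filter.atTop)
    (hu' : ((-f x : ℝ) : EReal) =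
      Filter.limsup (fun t : ℕ => (u' (initSeg x.val (t + 1)) : EReal)) Filter.atTop) :
    Filter.Tendsto (fun n => gApp u (fun s => -u' s) n x) Filter.atTop (nhds (f x)) := by
  have hex : ∀ n : ℕ, ∃ j, Cnd u (fun s => -u' s) n x j := fun n => exists_Cnd hu hu' n
  rw [Metric.tendsto_atTop]
  intro ε hε
  obtain ⟨N1, hN1⟩ := Filter.eventually_atTop.1
    (eventually_lt_of_coe_limsup hu (show (0:ℝ) < ε/3 by linarith))
  obtain ⟨N2, hN2⟩ := Filter.eventually_atTop.1
    (eventually_lt_of_coe_limsup hu' (show (0:ℝ) < ε/3 by linarith))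
  obtain ⟨N3, hN3⟩ : ∃ N3 : ℕ, 1 / ((N3 : ℝ) + 1) < ε/3 := by
    obtain ⟨N3, h⟩ := exists_nat_gt (3/ε)
    refine ⟨N3, ?_⟩
    have h1 : (3/ε) < (N3 : ℝ) + 1 := by linarith
    have h2 : (0:ℝ) < 3/ε := by positivity
    calc 1 / ((N3 : ℝ) + 1) < 1 / (3/ε) := one_div_lt_one_div_of_lt h2 h1
      _ = ε/3 := by rw [one_div_div]
  refine ⟨max N1 (max N2 N3), fun n hn => ?_⟩
  have hnN1 : N1 ≤ n := le_trans (le_max_left _ _) hn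
  have hnN2 : N2 ≤ n := le_trans (le_max_left _ _) (le_trans (le_max_right _ _) hn)
  have hnN3 : N3 ≤ n := le_trans (le_max_right _ _) (le_trans (le_max_right _ _) hn)
  set w : List A → ℝ := fun s => -u' s with hw
  have hCnd : Cnd u w n x (mdef u w n x) := by
    unfold mdef
    rw [dif_pos (hex n)]
    exact Nat.find_spec (hex n)
  have hA_lt : Amax u n (mdef u w n x) x < f x + ε/3 := by
    rw [Amax, Finset.sup'_lt_iff]
    intro k hk
    rw [Finset.mem_Icc] at hk
    exact hN1 k (by omega)
  have hB_gt : f x - ε/3 < Bmin w n (mdef u w n x) x := by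
    rw [Bmin, Finset.lt_inf'_iff]
    intro k hk
    rw [Finset.mem_Icc] at hk
    have := hN2 k (by omega)
    show f x - ε/3 < -u' (initSeg x.val (k + 1))
    linarith
  have hn1 : 1 / ((n : ℝ) + 1) ≤ 1 / ((N3 : ℝ) + 1) := by
    apply one_div_le_one_div_of_le (by positivity)
    have : (N3 : ℝ) ≤ (n : ℝ) := by exact_mod_cast hnN3
    linarith
  rw [Cnd] at hCnd
  have hgA : gApp u w n x = Amax u n (mdef u w n x) x := rfl
  rw [Real.dist_eq, abs_lt, hgA]
  constructor <;> linarith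

end BLF

/-- A function `f` is of Baire class 1 if and only if both `f` and `-f` are limsup
functions. -/
theorem baireClassOne_iff_limsupFunction
    {A : Type*} [Countable A] [Nonempty A] [TopologicalSpace A] [DiscreteTopology A]
    {T : Set (List A)} (hT : IsPrunedTree T) (f : Branches T → ℝ) :
    BaireClassOne f ↔ IsLimsupFunction f ∧ IsLimsupFunction (fun x => -f x) := by
  constructor
  · rintro ⟨g, hgc, hgl⟩
    constructor
    · exact ⟨BLF.usel hT g, fun x =>
        (BLF.limsup_coe_of_tendsto (BLF.forward_tendsto hT f g hgc hgl x)).symm⟩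
    · refine ⟨fun s => -BLF.usel hT g s, fun x => ?_⟩
      exact (BLF.limsup_coe_of_tendsto (BLF.forward_tendsto hT f g hgc hgl x).neg).symm
  · rintro ⟨⟨u, hu⟩, ⟨u', hu'⟩⟩
    refine ⟨fun n => BLF.gApp u (fun s => -u' s) n, fun n => ?_, fun x => ?_⟩
    · exact BLF.continuous_gApp (fun m x => BLF.exists_Cnd (hu x) (hu' x) m) n
    · exact BLF.gApp_tendsto x (hu x) (hu' x)
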